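/- Let 𝒜 be a locally λ-presentable category, T a λ-accessible endofunctor, and (A,B,f) ∈ T/𝒜 with the λ-directed poset D = D_{(A,B,f)} of tuples (i,j,k,q) as constructed in the paper, together with choices k(i,j) ∈ 𝒦 and q(i,j) : P_{i,j} → B_{k(i,j)} such that f ∘ Tα_i ∘ p_{i,j} = β_{k(i,j)} ∘ q(i,j). Then the subposet D' = {(i,j,k,q) ∈ D | k ≥ k(i,j) and q = β_{k(i,j)→k} ∘ q(i,j)} is cofinal in D, hence λ-directed. -/
import Mathlib


set_option linter.unusedSectionVars false

universe v u

open CategoryTheory Limits Opposite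

/-- A poset is `κ`-directed if every subset of cardinality `< κ` has an upper bound. -/
def IsCardinalDirected (κ : Cardinal.{v}) (D : Type v) [Preorder D] : Prop :=
  ∀ S : Set D, Cardinal.mk S < κ → ∃ b : D, ∀ s ∈ S, s ≤ b

variable {C : Type u} [Category.{v} C] (T : C ⥤ C)
  {I : Type v} [PartialOrder I] {K : Type v} [PartialOrder K]
  {J : I → Type v} [∀ i, PartialOrder (J i)]
  (A : I ⥤ C) (B : K ⥤ C) (Pf : ∀ i, J i ⥤ C)
  (cA : Cocone A) (cB : Cocone B)
  (pc : ∀ i, Pf i ⟶ (Functor.const (J i)).obj (T.obj (A.obj i)))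
  (f : T.obj cA.pt ⟶ cB.pt)

/-- An element of the poset `D_{(A,B,f)}`: a tuple `(i, j, k, q)` with
`q : P_{i,j} ⟶ B_k` such that `f ∘ Tα_i ∘ p_{i,j} = β_k ∘ q`. -/
structure DElem : Type v where
  i : I
  j : J i
  k : K
  q : (Pf i).obj j ⟶ B.obj k
  compat : (pc i).app j ≫ T.map (cA.ι.app i) ≫ f = q ≫ cB.ι.app k

/-- Transport of objects of `P` along an equality of indices. -/
theorem DElem.obj_eq {i i' : I} (h : i = i') (j : J i) :
    (Pf i).obj j = (Pf i').obj (congrArg J h ▸ j) := by subst h; rfl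

/-- The ordering on `D_{(A,B,f)}`: `(i,j,k,q) ≤ (i',j',k',q')` iff either (AA) `i = i'`,
`j ≤ j'`, `k ≤ k'` and `β_{k→k'} ∘ q = q' ∘ p_{i,j→j'}`, or (BB) `i < i'`, `k ≤ k'` and
there is `r : P_{i,j} ⟶ P_{i',j'}` with `Tα_{i→i'} ∘ p_{i,j} = p_{i',j'} ∘ r` and
`β_{k→k'} ∘ q = q' ∘ r`. -/
def DLe (d d' : DElem T A B Pf cA cB pc f) : Prop :=
  (∃ hi : d.i = d'.i, ∃ hj : (congrArg J hi ▸ d.j : J d'.i) ≤ d'.j, ∃ hk : d.k ≤ d'.k,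
    d.q ≫ B.map (homOfLE hk) =
      (eqToHom (DElem.obj_eq Pf hi d.j) ≫ (Pf d'.i).map (homOfLE hj)) ≫ d'.q) ∨
  (∃ hlt : d.i < d'.i, ∃ hk : d.k ≤ d'.k,
    ∃ r : (Pf d.i).obj d.j ⟶ (Pf d'.i).obj d'.j,
      (pc d.i).app d.j ≫ T.map (A.map (homOfLE hlt.le)) = r ≫ (pc d'.i).app d'.j ∧
      d.q ≫ B.map (homOfLE hk) = r ≫ d'.q)

/-- An object `X` is `κ`-presentable if `Hom(X, -)` preserves colimits indexed by
`κ`-directed posets. -/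
def IsPresentableObj (κ : Cardinal.{v}) {𝒞 : Type u} [Category.{v} 𝒞] (X : 𝒞) : Prop :=
  ∀ (D : Type v) [PartialOrder D], IsCardinalDirected κ D →
    Nonempty (PreservesColimitsOfShape D (coyoneda.obj (op X)))

set_option maxHeartbeats 1000000

section AuxL

variable {κ : Cardinal.{v}} {D : Type v} [PartialOrder D]

theorem IsCardinalDirected.nonempty' (hκ : κ.IsRegular) (h : IsCardinalDirected κ D) :
    Nonempty D := by
  obtain ⟨b, -⟩ := h ∅ (by simpa using hκ.pos)
  exact ⟨b⟩

theorem IsCardinalDirected.isDirected' (hκ : κ.IsRegular) (h : IsCardinalDirected κ D) :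
    IsDirected D (· ≤ ·) := by
  constructor
  intro a b
  obtain ⟨c, hc⟩ := h {a, b} ((Set.toFinite _).lt_aleph0.trans_le hκ.aleph0_le)
  exact ⟨c, hc a (by simp), hc b (by simp)⟩

variable {𝒞 : Type u} [Category.{v} 𝒞] {BB : D ⥤ 𝒞} {cBB : Cocone BB}

theorem ess_uniq (hκ : κ.IsRegular) (hD : IsCardinalDirected κ D)
    (hcB : IsColimit cBB) {P : 𝒞} (hP : IsPresentableObj κ P) {k₁ k₂ : D}
    (g₁ : P ⟶ BB.obj k₁) (g₂ : P ⟶ BB.obj k₂)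
    (h : g₁ ≫ cBB.ι.app k₁ = g₂ ≫ cBB.ι.app k₂) :
    ∃ (k : D) (h₁ : k₁ ≤ k) (h₂ : k₂ ≤ k),
      g₁ ≫ BB.map (homOfLE h₁) = g₂ ≫ BB.map (homOfLE h₂) := by
  haveI : Nonempty D := hD.nonempty' hκ
  haveI := hD.isDirected' hκ
  obtain ⟨pres⟩ := hP D hD
  have hc : IsColimit ((coyoneda.obj (op P)).mapCocone cBB) :=
    isColimitOfPreserves (coyoneda.obj (op P)) hcB
  have := (Types.FilteredColimit.isColimit_eq_iff (BB ⋙ coyoneda.obj (op P)) hc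
    (i := k₁) (j := k₂) (xi := g₁) (xj := g₂)).mp h
  obtain ⟨k, u, w, he⟩ := this
  exact ⟨k, leOfHom u, leOfHom w, he⟩

theorem ess_fact (hκ : κ.IsRegular) (hD : IsCardinalDirected κ D)
    (hcB : IsColimit cBB) {P : 𝒞} (hP : IsPresentableObj κ P)
    (g : P ⟶ cBB.pt) : ∃ (k : D) (g' : P ⟶ BB.obj k), g' ≫ cBB.ι.app k = g := by
  haveI : Nonempty D := hD.nonempty' hκ
  haveI := hD.isDirected' hκ
  obtain ⟨pres⟩ := hP D hD
  have hc : IsColimit ((coyoneda.obj (op P)).mapCocone cBB) :=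
    isColimitOfPreserves (coyoneda.obj (op P)) hcB
  obtain ⟨k, y, hy⟩ := Types.jointly_surjective _ hc g
  exact ⟨k, y, hy⟩

end AuxL

section Main

variable {κ : Cardinal.{v}}

theorem DLe_extend (d : DElem T A B Pf cA cB pc f) {i' : I} {j' : J i'} {k₁ k₂ : K}
    (hk : k₁ ≤ k₂) {q₁ : (Pf i').obj j' ⟶ B.obj k₁} {q₂ : (Pf i').obj j' ⟶ B.obj k₂}
    (hq : q₁ ≫ B.map (homOfLE hk) = q₂)
    {c₁ : (pc i').app j' ≫ T.map (cA.ι.app i') ≫ f = q₁ ≫ cB.ι.app k₁}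
    {c₂ : (pc i').app j' ≫ T.map (cA.ι.app i') ≫ f = q₂ ≫ cB.ι.app k₂}
    (h : DLe T A B Pf cA cB pc f d ⟨i', j', k₁, q₁, c₁⟩) :
    DLe T A B Pf cA cB pc f d ⟨i', j', k₂, q₂, c₂⟩ := by
  rcases h with ⟨hi, hj, hk', he⟩ | ⟨hi, hk', r, hr, he⟩
  · refine Or.inl ⟨hi, hj, hk'.trans hk, ?_⟩
    have h2 := he =≫ B.map (homOfLE hk)
    simp only [Category.assoc, ← Functor.map_comp, homOfLE_comp] at h2
    rw [hq] at h2
    simp only [Category.assoc]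
    exact h2
  · refine Or.inr ⟨hi, hk'.trans hk, r, hr, ?_⟩
    have h2 := he =≫ B.map (homOfLE hk)
    simp only [Category.assoc, ← Functor.map_comp, homOfLE_comp] at h2
    rw [hq] at h2
    exact h2

theorem aa_case (hκ : κ.IsRegular) (hK : IsCardinalDirected κ K) (hcB : IsColimit cB)
    (hP : ∀ i (j : J i), IsPresentableObj κ ((Pf i).obj j))
    (kc : ∀ i, J i → K) (qc : ∀ i (j : J i), (Pf i).obj j ⟶ B.obj (kc i j))
    (hqc : ∀ i (j : J i),
      (pc i).app j ≫ T.map (cA.ι.app i) ≫ f = qc i j ≫ cB.ι.app (kc i j))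
    (d : DElem T A B Pf cA cB pc f) (i' : I) (hi : d.i = i')
    (j' : J i') (hj : (congrArg J hi ▸ d.j : J i') ≤ j') :
    ∃ (k' : K) (h₁ : d.k ≤ k') (h₂ : kc i' j' ≤ k'),
      d.q ≫ B.map (homOfLE h₁) =
        (eqToHom (DElem.obj_eq Pf hi d.j) ≫ (Pf i').map (homOfLE hj)) ≫
          (qc i' j' ≫ B.map (homOfLE h₂)) := by
  subst hi
  have hnat : (Pf d.i).map (homOfLE hj) ≫ (pc d.i).app j' = (pc d.i).app d.j := by
    have := (pc d.i).naturality (homOfLE hj)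
    simpa using this
  have heq : d.q ≫ cB.ι.app d.k =
      ((Pf d.i).map (homOfLE hj) ≫ qc d.i j') ≫ cB.ι.app (kc d.i j') := by
    calc d.q ≫ cB.ι.app d.k
        = (pc d.i).app d.j ≫ T.map (cA.ι.app d.i) ≫ f := d.compat.symm
      _ = ((Pf d.i).map (homOfLE hj) ≫ (pc d.i).app j') ≫ T.map (cA.ι.app d.i) ≫ f := by
          rw [hnat]
      _ = (Pf d.i).map (homOfLE hj) ≫ (pc d.i).app j' ≫ T.map (cA.ι.app d.i) ≫ f := by
          rw [Category.assoc]
      _ = (Pf d.i).map (homOfLE hj) ≫ qc d.i j' ≫ cB.ι.app (kc d.i j') := by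
          rw [hqc d.i j']
      _ = ((Pf d.i).map (homOfLE hj) ≫ qc d.i j') ≫ cB.ι.app (kc d.i j') := by
          rw [Category.assoc]
  obtain ⟨k', h₁, h₂, he⟩ :=
    ess_uniq hκ hK hcB (hP d.i d.j) d.q ((Pf d.i).map (homOfLE hj) ≫ qc d.i j') heq
  refine ⟨k', h₁, h₂, ?_⟩
  simpa using he

theorem bb_case (hκ : κ.IsRegular) (hK : IsCardinalDirected κ K) (hcB : IsColimit cB)
    (hP : ∀ i (j : J i), IsPresentableObj κ ((Pf i).obj j))
    (kc : ∀ i, J i → K) (qc : ∀ i (j : J i), (Pf i).obj j ⟶ B.obj (kc i j))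
    (hqc : ∀ i (j : J i),
      (pc i).app j ≫ T.map (cA.ι.app i) ≫ f = qc i j ≫ cB.ι.app (kc i j))
    (d : DElem T A B Pf cA cB pc f) (i' : I) (hile : d.i ≤ i') (j' : J i')
    (r : (Pf d.i).obj d.j ⟶ (Pf i').obj j')
    (hr : r ≫ (pc i').app j' = (pc d.i).app d.j ≫ T.map (A.map (homOfLE hile))) :
    ∃ (k' : K) (h₁ : d.k ≤ k') (h₂ : kc i' j' ≤ k'),
      d.q ≫ B.map (homOfLE h₁) = r ≫ (qc i' j' ≫ B.map (homOfLE h₂)) := by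
  have heq : d.q ≫ cB.ι.app d.k = (r ≫ qc i' j') ≫ cB.ι.app (kc i' j') := by
    calc d.q ≫ cB.ι.app d.k
        = (pc d.i).app d.j ≫ T.map (cA.ι.app d.i) ≫ f := d.compat.symm
      _ = (pc d.i).app d.j ≫ T.map (A.map (homOfLE hile) ≫ cA.ι.app i') ≫ f := by
          rw [cA.w]
      _ = ((pc d.i).app d.j ≫ T.map (A.map (homOfLE hile))) ≫ T.map (cA.ι.app i') ≫ f := by
          rw [T.map_comp]; simp only [Category.assoc]
      _ = (r ≫ (pc i').app j') ≫ T.map (cA.ι.app i') ≫ f := by rw [hr]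
      _ = r ≫ (pc i').app j' ≫ T.map (cA.ι.app i') ≫ f := by rw [Category.assoc]
      _ = r ≫ qc i' j' ≫ cB.ι.app (kc i' j') := by rw [hqc i' j']
      _ = (r ≫ qc i' j') ≫ cB.ι.app (kc i' j') := by rw [Category.assoc]
  obtain ⟨k', h₁, h₂, he⟩ := ess_uniq hκ hK hcB (hP d.i d.j) d.q (r ≫ qc i' j') heq
  refine ⟨k', h₁, h₂, ?_⟩
  simpa using he

end Main

/-- Given choices `k(i,j)` and `q(i,j)` with `f ∘ Tα_i ∘ p_{i,j} = β_{k(i,j)} ∘ q(i,j)`,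
the subposet `D' = {(i,j,k,q) ∈ D | k ≥ k(i,j), q = β_{k(i,j)→k} ∘ q(i,j)}` is cofinal
in `D = D_{(A,B,f)}`, hence `κ`-directed. -/
theorem Dsub_cofinal (κ : Cardinal.{v}) (hκ : κ.IsRegular)
    (hI : IsCardinalDirected κ I) (hK : IsCardinalDirected κ K)
    (hJ : ∀ i, IsCardinalDirected κ (J i))
    (hA : ∀ i, IsPresentableObj κ (A.obj i))
    (hB : ∀ k, IsPresentableObj κ (B.obj k))
    (hP : ∀ i (j : J i), IsPresentableObj κ ((Pf i).obj j))
    (hcA : IsColimit cA) (hcB : IsColimit cB)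
    (hcP : ∀ i, Nonempty (IsColimit (Cocone.mk (T.obj (A.obj i)) (pc i))))
    (kc : ∀ i, J i → K) (qc : ∀ i (j : J i), (Pf i).obj j ⟶ B.obj (kc i j))
    (hqc : ∀ i (j : J i),
      (pc i).app j ≫ T.map (cA.ι.app i) ≫ f = qc i j ≫ cB.ι.app (kc i j)) :
    letI D' : Set (DElem T A B Pf cA cB pc f) :=
      {d | ∃ hk : kc d.i d.j ≤ d.k, d.q = qc d.i d.j ≫ B.map (homOfLE hk)}
    (∀ d : DElem T A B Pf cA cB pc f, ∃ d' ∈ D', DLe T A B Pf cA cB pc f d d') ∧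
      (∀ S : Set D', Cardinal.mk S < κ →
        ∃ ub : D', ∀ s ∈ S, DLe T A B Pf cA cB pc f s.1 ub.1) := by
  constructor
  · intro d
    have heq : d.q ≫ cB.ι.app d.k = qc d.i d.j ≫ cB.ι.app (kc d.i d.j) := by
      rw [← d.compat, hqc]
    obtain ⟨k, h₁, h₂, he⟩ := ess_uniq hκ hK hcB (hP d.i d.j) d.q (qc d.i d.j) heq
    have hcompat : (pc d.i).app d.j ≫ T.map (cA.ι.app d.i) ≫ f =
        (qc d.i d.j ≫ B.map (homOfLE h₂)) ≫ cB.ι.app k := by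
      rw [hqc d.i d.j, Category.assoc, cB.w]
    refine ⟨⟨d.i, d.j, k, qc d.i d.j ≫ B.map (homOfLE h₂), hcompat⟩, ⟨h₂, rfl⟩,
      Or.inl ⟨rfl, by exact le_rfl, h₁, by simpa using he⟩⟩
  · intro S hS
    classical
    set F : S → DElem T A B Pf cA cB pc f := fun s => s.1.1 with hF
    obtain ⟨istar, histar⟩ := hI (Set.range fun s => (F s).i)
      (Cardinal.mk_range_le.trans_lt hS)
    have hle : ∀ s : S, (F s).i ≤ istar := fun s => histar _ ⟨s, rfl⟩
    have hfac : ∀ s : S, ∃ (j' : J istar)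
        (r : (Pf (F s).i).obj (F s).j ⟶ (Pf istar).obj j'),
        r ≫ (pc istar).app j' =
          (pc (F s).i).app (F s).j ≫ T.map (A.map (homOfLE (hle s))) := by
      intro s
      obtain ⟨j', r, hr⟩ := ess_fact hκ (hJ istar) (hcP istar).some (hP (F s).i (F s).j)
        ((pc (F s).i).app (F s).j ≫ T.map (A.map (homOfLE (hle s))))
      exact ⟨j', r, hr⟩
    choose jC rC hrC using hfac
    have hjTd : ∀ s : S, ∃ j : J istar,
        ((F s).i = istar → ∃ h : (F s).i = istar, j = (congrArg J h ▸ (F s).j)) ∧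
        (¬ (F s).i = istar → j = jC s) := by
      intro s
      by_cases h : (F s).i = istar
      · exact ⟨congrArg J h ▸ (F s).j, fun _ => ⟨h, rfl⟩, fun hn => absurd h hn⟩
      · exact ⟨jC s, fun he => absurd he h, fun _ => rfl⟩
    choose jT hjT1 hjT2 using hjTd
    obtain ⟨jstar, hjstar⟩ := hJ istar (Set.range jT) (Cardinal.mk_range_le.trans_lt hS)
    have hjle : ∀ s, jT s ≤ jstar := fun s => hjstar _ ⟨s, rfl⟩
    have hkcompat : ∀ (k' : K) (h₂ : kc istar jstar ≤ k'),
        (pc istar).app jstar ≫ T.map (cA.ι.app istar) ≫ f =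
          (qc istar jstar ≫ B.map (homOfLE h₂)) ≫ cB.ι.app k' := by
      intro k' h₂
      rw [hqc istar jstar, Category.assoc, cB.w]
    have key : ∀ s : S, ∃ (k' : K) (h₂ : kc istar jstar ≤ k'),
        DLe T A B Pf cA cB pc f (F s)
          ⟨istar, jstar, k', qc istar jstar ≫ B.map (homOfLE h₂), hkcompat k' h₂⟩ := by
      intro s
      rcases eq_or_lt_of_le (hle s) with h | h
      · obtain ⟨h', hjTs⟩ := hjT1 s h
        have hjs : (congrArg J h' ▸ (F s).j : J istar) ≤ jstar := by
          rw [← hjTs]; exact hjle s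
        obtain ⟨k', h₁, h₂, he⟩ :=
          aa_case T A B Pf cA cB pc f hκ hK hcB hP kc qc hqc (F s) istar h' jstar hjs
        exact ⟨k', h₂, Or.inl ⟨h', hjs, h₁, he⟩⟩
      · have hjs : jC s ≤ jstar := by
          rw [← hjT2 s (by intro he; exact absurd he h.ne)]; exact hjle s
        have hnat : (Pf istar).map (homOfLE hjs) ≫ (pc istar).app jstar =
            (pc istar).app (jC s) := by
          have := (pc istar).naturality (homOfLE hjs)
          simpa using this
        have hr : (rC s ≫ (Pf istar).map (homOfLE hjs)) ≫ (pc istar).app jstar =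
            (pc (F s).i).app (F s).j ≫ T.map (A.map (homOfLE (hle s))) := by
          rw [Category.assoc, hnat, hrC s]
        obtain ⟨k', h₁, h₂, he⟩ :=
          bb_case T A B Pf cA cB pc f hκ hK hcB hP kc qc hqc (F s) istar (hle s) jstar
            (rC s ≫ (Pf istar).map (homOfLE hjs)) hr
        exact ⟨k', h₂, Or.inr ⟨h, h₁, rC s ≫ (Pf istar).map (homOfLE hjs), hr.symm, he⟩⟩
    choose kE h₂E hDle using key
    have hins : Cardinal.mk ↥(insert (kc istar jstar) (Set.range kE) : Set K) < κ := by
      refine lt_of_le_of_lt (Cardinal.mk_insert_le) ?_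
      exact Cardinal.add_lt_of_lt hκ.aleph0_le
        (Cardinal.mk_range_le.trans_lt hS)
        (Cardinal.one_lt_aleph0.trans_le hκ.aleph0_le)
    obtain ⟨kstar, hkstar⟩ := hK _ hins
    have hkc : kc istar jstar ≤ kstar := hkstar _ (Set.mem_insert _ _)
    have hkE : ∀ s : S, kE s ≤ kstar := fun s => hkstar _ (Set.mem_insert_of_mem _ ⟨s, rfl⟩)
    refine ⟨⟨⟨istar, jstar, kstar, qc istar jstar ≫ B.map (homOfLE hkc), hkcompat kstar hkc⟩,
      ⟨hkc, rfl⟩⟩, ?_⟩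
    intro s hs
    have hq : (qc istar jstar ≫ B.map (homOfLE (h₂E ⟨s, hs⟩))) ≫ B.map (homOfLE (hkE ⟨s, hs⟩)) =
        qc istar jstar ≫ B.map (homOfLE hkc) := by
      simp only [Category.assoc, ← Functor.map_comp, homOfLE_comp]
    exact DLe_extend T A B Pf cA cB pc f (F ⟨s, hs⟩) (hkE ⟨s, hs⟩) hq (hDle ⟨s, hs⟩)
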